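/- Let α ∈ (0,2], let d be a positive integer, and let Λ be a measure on ℝ^d that is finite on bounded sets. Suppose there exist constants H ≥ 0, C ≥ 0 and ε > 0 such that |t^{-α} Λ(B(0,t)) − H| ≤ C t^{-ε} for every t ≥ 1, where B(0,t) is the closed ball of radius t centred at the origin. Let q : [0,∞) → [0,∞) be a nonincreasing function with q(0) < ∞ and ∫_0^∞ q(r) r^{α−1} dr < ∞. Then lim_{t→∞} t^{-1} ∫_{ℝ^d} q(t^{-1/α} |x|) Λ(dx) = H · α ∫_0^∞ q(r) r^{α−1} dr. -/

import Mathlib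

open MeasureTheory Filter Set Metric

theorem stmt0
    (d : ℕ) (hd : 0 < d) (α : ℝ) (hα : α ∈ Set.Ioc (0:ℝ) 2)
    (Λ : Measure (EuclideanSpace ℝ (Fin d)))
    (hΛ : ∀ s : Set (EuclideanSpace ℝ (Fin d)), Bornology.IsBounded s → Λ s < ⊤)
    (H C ε : ℝ) (hH : 0 ≤ H) (hC : 0 ≤ C) (hε : 0 < ε)
    (hball : ∀ t : ℝ, 1 ≤ t →
      |t ^ (-α) * (Λ (Metric.closedBall 0 t)).toReal - H| ≤ C * t ^ (-ε))
    (q : ℝ → ℝ) (hq0 : ∀ r, 0 ≤ q r) (hq : AntitoneOn q (Set.Ici 0))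
    (hint : IntegrableOn (fun r => q r * r ^ (α - 1)) (Set.Ioi 0)) :
    Tendsto (fun t : ℝ => t⁻¹ * ∫ x, q (t ^ (-(1/α)) * ‖x‖) ∂Λ) atTop
      (nhds (H * (α * ∫ r in Set.Ioi (0:ℝ), q r * r ^ (α - 1)))) := by
  obtain ⟨hα0, hα2⟩ := hα
  -- a smaller exponent ε' ∈ (0, α)
  set ε' : ℝ := min ε (α/2) with hε'def
  have hε'0 : 0 < ε' := lt_min hε (by linarith)
  have hε'α : ε' < α := lt_of_le_of_lt (min_le_right _ _) (by linarith)
  have hε'ε : ε' ≤ ε := min_le_left _ _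
  -- the radial distribution function
  set F : ℝ → ℝ := fun r => (Λ (Metric.closedBall 0 r)).toReal with hFdef
  have hΛball : ∀ r : ℝ, Λ (Metric.closedBall 0 r) ≠ ⊤ :=
    fun r => (hΛ _ isBounded_closedBall).ne
  have hFmono : Monotone F := fun a b hab =>
    ENNReal.toReal_mono (hΛball b) (measure_mono (closedBall_subset_closedBall hab))
  have hF0 : ∀ r, 0 ≤ F r := fun r => ENNReal.toReal_nonneg
  have hball' : ∀ t : ℝ, 1 ≤ t → |t ^ (-α) * F t - H| ≤ C * t ^ (-ε') := by
    intro t ht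
    refine (hball t ht).trans (mul_le_mul_of_nonneg_left ?_ hC)
    exact Real.rpow_le_rpow_of_exponent_le ht (neg_le_neg hε'ε)
  have hF1 : F 1 ≤ H + C := by
    have h := hball' 1 le_rfl
    rw [Real.one_rpow, one_mul, Real.one_rpow, mul_one] at h
    have h2 := (abs_le.mp h).2
    linarith
  -- the globally antitone version of q
  set Q : ℝ → ℝ := fun r => q (max r 0) with hQdef
  have hQanti : Antitone Q := fun a b hab =>
    hq (mem_Ici.mpr (le_max_right a 0)) (mem_Ici.mpr (le_max_right b 0))
      (max_le_max hab le_rfl)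
  have hQmeas : Measurable Q := hQanti.measurable
  have hQ0 : ∀ r, 0 ≤ Q r := fun r => hq0 _
  have hQq : ∀ r : ℝ, 0 ≤ r → Q r = q r := fun r hr => by
    simp only [hQdef, max_eq_left hr]
  -- superlevel sets and their suprema
  set S : ℝ → Set ℝ := fun s => {r : ℝ | 0 ≤ r ∧ s < Q r} with hSdef
  have hSbdd : ∀ s : ℝ, 0 < s → BddAbove (S s) := by
    intro s hs
    by_contra hb
    rw [not_bddAbove_iff] at hb
    have hall : ∀ r : ℝ, 0 < r → s ≤ q r := by
      intro r hr
      obtain ⟨r', hr', hrr'⟩ := hb r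
      have h1 : Q r' ≤ Q r := hQanti hrr'.le
      have h2 : s < Q r := lt_of_lt_of_le hr'.2 h1
      rw [hQq r hr.le] at h2; exact h2.le
    have hint2 : IntegrableOn (fun r : ℝ => s * r ^ (α - 1)) (Set.Ioi 0) := by
      refine Integrable.mono' hint ?_ ?_
      · exact (measurable_const.mul
          (by fun_prop : Measurable fun r : ℝ => r ^ (α - 1))).aestronglyMeasurable
      · rw [ae_restrict_iff' measurableSet_Ioi]
        refine ae_of_all _ fun r hr => ?_
        have hr0 : (0:ℝ) < r := hr
        have h1 : 0 ≤ r ^ (α - 1) := Real.rpow_nonneg hr0.le _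
        rw [Real.norm_eq_abs, abs_of_nonneg (mul_nonneg hs.le h1)]
        exact mul_le_mul_of_nonneg_right (hall r hr0) h1
    have hint3 : IntegrableOn (fun r : ℝ => r ^ (α - 1)) (Set.Ioi 0) := by
      have h4 := hint2.const_mul s⁻¹
      refine h4.congr (ae_of_all _ fun r => ?_)
      simp only [← mul_assoc, inv_mul_cancel₀ (ne_of_gt hs), one_mul]
    exact not_integrableOn_Ioi_rpow (α - 1) hint3
  set ρ : ℝ → ℝ := fun s => sSup (S s) with hρdef
  have hρ0 : ∀ s, 0 ≤ ρ s := fun s => Real.sSup_nonneg fun x hx => hx.1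
  have hρub : ∀ s : ℝ, 0 < s → ∀ r ∈ S s, r ≤ ρ s := fun s hs r hr =>
    le_csSup (hSbdd s hs) hr
  have hSne : ∀ s : ℝ, 0 < ρ s → (S s).Nonempty := by
    intro s h
    by_contra hne
    rw [not_nonempty_iff_eq_empty] at hne
    have : ρ s = 0 := by rw [hρdef]; simp only [hne, Real.sSup_empty]
    linarith
  have hQgt : ∀ s r : ℝ, 0 ≤ r → r < ρ s → s < Q r := by
    intro s r hr0 hrρ
    obtain ⟨r', hr'S, hrr'⟩ := exists_lt_of_lt_csSup (hSne s (lt_of_le_of_lt hr0 hrρ)) hrρ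
    exact lt_of_lt_of_le hr'S.2 (hQanti hrr'.le)
  -- basic rpow facts
  have hc : ∀ t : ℝ, 1 ≤ t → 0 < t ^ (-(1/α)) :=
    fun t ht => Real.rpow_pos_of_pos (by linarith) _
  have hcinv : ∀ t : ℝ, 1 ≤ t → (t ^ (-(1/α)) : ℝ)⁻¹ = t ^ (1/α) := by
    intro t ht
    rw [Real.rpow_neg (by linarith : (0:ℝ) ≤ t), inv_inv]
  have hident : ∀ t R : ℝ, 0 < t → 0 < R → (t ^ (1/α) * R) ^ (-α) * R ^ α = t⁻¹ := by
    intro t R ht0 hR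
    have h3 : ((1:ℝ)/α) * (-α) = -1 := by field_simp
    rw [Real.mul_rpow (Real.rpow_nonneg ht0.le _) hR.le, mul_assoc,
        ← Real.rpow_add hR, neg_add_cancel, Real.rpow_zero, mul_one,
        ← Real.rpow_mul ht0.le, h3, Real.rpow_neg_one]
  -- Lemma A : pointwise convergence of the rescaled ball masses
  have lemA : ∀ R : ℝ, 0 < R →
      Tendsto (fun t : ℝ => t⁻¹ * F (t ^ (1/α) * R)) atTop (nhds (H * R ^ α)) := by
    intro R hR
    rw [tendsto_iff_dist_tendsto_zero]
    refine squeeze_zero_norm' (a := fun t : ℝ => C * (t ^ (1/α) * R) ^ (-ε') * R ^ α) ?_ ?_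
    · have h1 : Tendsto (fun t : ℝ => t ^ (1/α) * R) atTop atTop :=
        (tendsto_rpow_atTop (by positivity)).atTop_mul_const hR
      filter_upwards [h1.eventually_ge_atTop 1, eventually_gt_atTop (0:ℝ)] with t hu ht0
      set u := t ^ (1/α) * R with hudef
      have hu0 : (0:ℝ) < u := by linarith
      have hkey := hball' u hu
      have hident' : u ^ (-α) * R ^ α = t⁻¹ := hident t R ht0 hR
      have h2 : t⁻¹ * F u - H * R ^ α = (u ^ (-α) * F u - H) * R ^ α := by
        rw [← hident']; ring
      have hRα : 0 ≤ R ^ α := Real.rpow_nonneg hR.le _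
      rw [Real.norm_eq_abs, Real.dist_eq, abs_abs, h2, abs_mul, abs_of_nonneg hRα]
      exact mul_le_mul_of_nonneg_right hkey hRα
    · have h1 : Tendsto (fun t : ℝ => t ^ (1/α) * R) atTop atTop :=
        (tendsto_rpow_atTop (by positivity)).atTop_mul_const hR
      have h2 : Tendsto (fun t : ℝ => (t ^ (1/α) * R) ^ (-ε')) atTop (nhds 0) :=
        (tendsto_rpow_neg_atTop hε'0).comp h1
      simpa using (h2.const_mul C).mul_const (R ^ α)
  -- Lemma B : uniform upper bound
  have lemB : ∀ t : ℝ, 1 ≤ t → ∀ R : ℝ, 0 < R → 1 ≤ t ^ (1/α) * R →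
      t⁻¹ * F (t ^ (1/α) * R) ≤ H * R ^ α + C * R ^ (α - ε') := by
    intro t ht R hR hu
    set u := t ^ (1/α) * R with hudef
    have ht0 : (0:ℝ) < t := by linarith
    have hu0 : (0:ℝ) < u := by linarith
    have hkey := (abs_le.mp (hball' u hu)).2
    have hident' : u ^ (-α) * R ^ α = t⁻¹ := hident t R ht0 hR
    have hRα : 0 ≤ R ^ α := Real.rpow_nonneg hR.le _
    have hRu : R ≤ u := by
      have h5 : (1:ℝ) ≤ t ^ (1/α) := by
        have := Real.rpow_le_rpow zero_le_one ht (by positivity : (0:ℝ) ≤ 1/α)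
        rwa [Real.one_rpow] at this
      calc R = 1 * R := (one_mul R).symm
      _ ≤ t ^ (1/α) * R := mul_le_mul_of_nonneg_right h5 hR.le
    have hεu : u ^ (-ε') ≤ R ^ (-ε') := by
      rw [Real.rpow_neg hu0.le, Real.rpow_neg hR.le]
      exact inv_anti₀ (Real.rpow_pos_of_pos hR _)
        (Real.rpow_le_rpow hR.le hRu hε'0.le)
    have hsplit : R ^ (α - ε') = R ^ (-ε') * R ^ α := by
      rw [← Real.rpow_add hR]; ring_nf
    calc t⁻¹ * F u = (u ^ (-α) * F u) * R ^ α := by rw [← hident']; ring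
    _ ≤ (H + C * u ^ (-ε')) * R ^ α := by
        refine mul_le_mul_of_nonneg_right ?_ hRα
        linarith
    _ = H * R ^ α + C * (u ^ (-ε') * R ^ α) := by ring
    _ ≤ H * R ^ α + C * (R ^ (-ε') * R ^ α) := by
        have := mul_le_mul_of_nonneg_right hεu hRα
        nlinarith
    _ = H * R ^ α + C * R ^ (α - ε') := by rw [hsplit]
  -- the superlevel measure
  set G : ℝ → ℝ → ENNReal :=
    fun t s => Λ {x | s < Q (t ^ (-(1/α)) * ‖x‖)} with hGdef
  have hGanti : ∀ t, Antitone (G t) := fun t a b hab =>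
    measure_mono fun x hx => lt_of_le_of_lt hab hx
  have hGmeas : ∀ t, Measurable (G t) := fun t => (hGanti t).measurable
  have hGsub : ∀ t : ℝ, 1 ≤ t → ∀ s : ℝ, 0 < s →
      {x : EuclideanSpace ℝ (Fin d) | s < Q (t ^ (-(1/α)) * ‖x‖)} ⊆
        Metric.closedBall 0 (t ^ (1/α) * ρ s) := by
    intro t ht s hs x hx
    have hc0 := hc t ht
    have hmem : t ^ (-(1/α)) * ‖x‖ ∈ S s := ⟨mul_nonneg hc0.le (norm_nonneg x), hx⟩
    have h1 : t ^ (-(1/α)) * ‖x‖ ≤ ρ s := hρub s hs _ hmem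
    rw [mem_closedBall_zero_iff]
    calc ‖x‖ = (t ^ (-(1/α)))⁻¹ * (t ^ (-(1/α)) * ‖x‖) := by
          rw [← mul_assoc, inv_mul_cancel₀ hc0.ne', one_mul]
    _ ≤ (t ^ (-(1/α)))⁻¹ * ρ s :=
        mul_le_mul_of_nonneg_left h1 (inv_nonneg.mpr hc0.le)
    _ = t ^ (1/α) * ρ s := by rw [hcinv t ht]
  have hGfin : ∀ t : ℝ, 1 ≤ t → ∀ s : ℝ, 0 < s → G t s ≠ ⊤ := fun t ht s hs =>
    ((measure_mono (hGsub t ht s hs)).trans_lt (hΛ _ isBounded_closedBall)).ne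
  have hGF : ∀ t : ℝ, 1 ≤ t → ∀ s : ℝ, 0 < s →
      (G t s).toReal ≤ F (t ^ (1/α) * ρ s) := fun t ht s hs =>
    ENNReal.toReal_mono (hΛball _) (measure_mono (hGsub t ht s hs))
  have hGlow : ∀ t : ℝ, 1 ≤ t → ∀ s R : ℝ, 0 < R → R < ρ s →
      Metric.closedBall (0 : EuclideanSpace ℝ (Fin d)) (t ^ (1/α) * R) ⊆
        {x | s < Q (t ^ (-(1/α)) * ‖x‖)} := by
    intro t ht s R hR hRρ x hx
    rw [mem_closedBall_zero_iff] at hx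
    have hc0 := hc t ht
    have harg : t ^ (-(1/α)) * ‖x‖ < ρ s := by
      have h1 : t ^ (-(1/α)) * ‖x‖ ≤ t ^ (-(1/α)) * (t ^ (1/α) * R) :=
        mul_le_mul_of_nonneg_left hx hc0.le
      have he : t ^ (-(1/α)) * (t ^ (1/α) * R) = R := by
        rw [← mul_assoc, ← Real.rpow_add (by linarith : (0:ℝ) < t), neg_add_cancel,
          Real.rpow_zero, one_mul]
      rw [he] at h1
      linarith
    exact hQgt s _ (mul_nonneg hc0.le (norm_nonneg x)) harg
  -- the key layer-cake identity for ρ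
  have keyE : ∀ β : ℝ, 0 < β → IntegrableOn (fun r => q r * r ^ (β - 1)) (Set.Ioi 0) →
      ∫⁻ s in Set.Ioi (0:ℝ), ENNReal.ofReal (ρ s ^ β) =
        ENNReal.ofReal (β * ∫ r in Set.Ioi (0:ℝ), q r * r ^ (β - 1)) := by
    intro β hβ hqβ
    have hDmeas : Measurable fun r : ℝ => ENNReal.ofReal (β * r ^ (β - 1)) := by fun_prop
    set ν : Measure ℝ :=
      (volume.restrict (Set.Ioi 0)).withDensity (fun r => ENNReal.ofReal (β * r ^ (β - 1)))
      with hνdef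
    have hlc := lintegral_eq_lintegral_meas_lt ν (ae_of_all _ hQ0) hQmeas.aemeasurable
    have hLHS : ∫⁻ r, ENNReal.ofReal (Q r) ∂ν =
        ENNReal.ofReal (β * ∫ r in Set.Ioi (0:ℝ), q r * r ^ (β - 1)) := by
      rw [hνdef, lintegral_withDensity_eq_lintegral_mul _ hDmeas hQmeas.ennreal_ofReal]
      have h1 : ∀ᵐ r ∂(volume.restrict (Set.Ioi (0:ℝ))),
          ((fun r => ENNReal.ofReal (β * r ^ (β - 1))) * fun r => ENNReal.ofReal (Q r)) r
            = ENNReal.ofReal (β * (q r * r ^ (β - 1))) := by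
        rw [ae_restrict_iff' measurableSet_Ioi]
        refine ae_of_all _ fun r hr => ?_
        have hr0 : (0:ℝ) < r := hr
        have h2 : β * (q r * r ^ (β - 1)) = (β * r ^ (β - 1)) * q r := by ring
        simp only [Pi.mul_apply]
        rw [hQq r hr0.le, ← ENNReal.ofReal_mul (by positivity : (0:ℝ) ≤ β * r ^ (β - 1))]
        congr 1
        ring
      rw [lintegral_congr_ae h1,
        ← ofReal_integral_eq_lintegral_ofReal ((hqβ.const_mul β)) ?_]
      · rw [integral_const_mul]
      · refine (ae_restrict_iff' measurableSet_Ioi).mpr (ae_of_all _ fun r hr => ?_)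
        have hr0 : (0:ℝ) < r := hr
        have := hq0 r
        positivity
    have hRHS : ∀ s : ℝ, s ∈ Set.Ioi (0:ℝ) → ν {r | s < Q r} = ENNReal.ofReal (ρ s ^ β) := by
      intro s hs
      have hs0 : (0:ℝ) < s := hs
      have hAmeas : MeasurableSet {r : ℝ | s < Q r} := measurableSet_lt measurable_const hQmeas
      rw [hνdef, withDensity_apply _ hAmeas, Measure.restrict_restrict hAmeas]
      have hIoc : ∫⁻ r in Set.Ioc 0 (ρ s), ENNReal.ofReal (β * r ^ (β - 1)) =
          ENNReal.ofReal (ρ s ^ β) := by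
        rcases eq_or_lt_of_le (hρ0 s) with h0 | h0
        · rw [← h0]
          simp [Real.zero_rpow hβ.ne']
        · have hInt : IntegrableOn (fun r : ℝ => β * r ^ (β - 1)) (Set.Ioc 0 (ρ s)) := by
            have h5 := intervalIntegral.intervalIntegrable_rpow'
              (a := 0) (b := ρ s) (by linarith : (-1:ℝ) < β - 1)
            exact ((intervalIntegrable_iff_integrableOn_Ioc_of_le (hρ0 s)).mp h5).const_mul β
          rw [← ofReal_integral_eq_lintegral_ofReal hInt ?_]
          · congr 1
            rw [← intervalIntegral.integral_of_le (hρ0 s), intervalIntegral.integral_const_mul,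
              integral_rpow (Or.inl (by linarith : (-1:ℝ) < β - 1))]
            have hb : β - 1 + 1 = β := by ring
            rw [hb, Real.zero_rpow hβ.ne']
            field_simp
            rw [sub_zero]
          · refine (ae_restrict_iff' measurableSet_Ioc).mpr (ae_of_all _ fun r hr => ?_)
            have hr0 : (0:ℝ) < r := hr.1
            positivity
      have hIoo : ∫⁻ r in Set.Ioo 0 (ρ s), ENNReal.ofReal (β * r ^ (β - 1)) =
          ENNReal.ofReal (ρ s ^ β) := by
        rw [Measure.restrict_congr_set Ioo_ae_eq_Ioc, hIoc]
      have hsub1 : {r : ℝ | s < Q r} ∩ Set.Ioi 0 ⊆ Set.Ioc 0 (ρ s) := by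
        rintro r ⟨hr1, hr2⟩
        have hr0 : (0:ℝ) < r := hr2
        exact ⟨hr0, hρub s hs0 r ⟨hr0.le, hr1⟩⟩
      have hsub2 : Set.Ioo 0 (ρ s) ⊆ {r : ℝ | s < Q r} ∩ Set.Ioi 0 := by
        rintro r ⟨hr1, hr2⟩
        exact ⟨hQgt s r hr1.le hr2, hr1⟩
      refine le_antisymm ?_ ?_
      · calc ∫⁻ r in {r | s < Q r} ∩ Set.Ioi 0, ENNReal.ofReal (β * r ^ (β - 1)) ∂volume
            ≤ ∫⁻ r in Set.Ioc 0 (ρ s), ENNReal.ofReal (β * r ^ (β - 1)) ∂volume :=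
              lintegral_mono_set hsub1
        _ = ENNReal.ofReal (ρ s ^ β) := hIoc
      · calc ENNReal.ofReal (ρ s ^ β)
            = ∫⁻ r in Set.Ioo 0 (ρ s), ENNReal.ofReal (β * r ^ (β - 1)) ∂volume := hIoo.symm
        _ ≤ ∫⁻ r in {r | s < Q r} ∩ Set.Ioi 0, ENNReal.ofReal (β * r ^ (β - 1)) ∂volume :=
              lintegral_mono_set hsub2
    have h2 : ∫⁻ s in Set.Ioi (0:ℝ), ν {r | s < Q r}
        = ∫⁻ s in Set.Ioi (0:ℝ), ENNReal.ofReal (ρ s ^ β) :=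
      setLIntegral_congr_fun measurableSet_Ioi hRHS
    rw [← h2, ← hlc, hLHS]
  -- integrability of q r * r^(α-ε'-1)
  have lemH : IntegrableOn (fun r : ℝ => q r * r ^ (α - ε' - 1)) (Set.Ioi 0) := by
    have hsplit : Set.Ioc (0:ℝ) 1 ∪ Set.Ioi 1 = Set.Ioi 0 := Ioc_union_Ioi_eq_Ioi zero_le_one
    rw [← hsplit]
    refine IntegrableOn.union ?_ ?_
    · have hbase : IntegrableOn (fun r : ℝ => r ^ (α - ε' - 1)) (Set.Ioc 0 1) :=
        (intervalIntegrable_iff_integrableOn_Ioc_of_le zero_le_one).mp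
          (intervalIntegral.intervalIntegrable_rpow' (by linarith))
      refine Integrable.mono' (hbase.const_mul (q 0)) ?_ ?_
      · refine AEStronglyMeasurable.congr
          ((hQmeas.mul (by fun_prop : Measurable fun r : ℝ => r ^ (α - ε' - 1))).aestronglyMeasurable) ?_
        exact (ae_restrict_iff' measurableSet_Ioc).mpr
          (ae_of_all _ fun r hr => by simp only [Pi.mul_apply, hQq r hr.1.le])
      · rw [ae_restrict_iff' measurableSet_Ioc]
        refine ae_of_all _ fun r hr => ?_
        have h1 : 0 ≤ r ^ (α - ε' - 1) := Real.rpow_nonneg hr.1.le _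
        rw [Real.norm_eq_abs, abs_of_nonneg (mul_nonneg (hq0 r) h1)]
        exact mul_le_mul_of_nonneg_right
          (hq (mem_Ici.mpr le_rfl) (mem_Ici.mpr hr.1.le) hr.1.le) h1
    · refine Integrable.mono' (hint.mono_set (Ioi_subset_Ioi zero_le_one)) ?_ ?_
      · refine AEStronglyMeasurable.congr
          ((hQmeas.mul (by fun_prop : Measurable fun r : ℝ => r ^ (α - ε' - 1))).aestronglyMeasurable) ?_
        exact (ae_restrict_iff' measurableSet_Ioi).mpr
          (ae_of_all _ fun r hr => by
            simp only [Pi.mul_apply, hQq r (le_trans zero_le_one (le_of_lt hr))])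
      · rw [ae_restrict_iff' measurableSet_Ioi]
        refine ae_of_all _ fun r hr => ?_
        have hr1 : (1:ℝ) < r := hr
        have h1 : r ^ (α - ε' - 1) ≤ r ^ (α - 1) :=
          Real.rpow_le_rpow_of_exponent_le hr1.le (by linarith)
        rw [Real.norm_eq_abs, abs_of_nonneg (mul_nonneg (hq0 r)
          (Real.rpow_nonneg (by linarith) _))]
        exact mul_le_mul_of_nonneg_left h1 (hq0 r)
  -- measurability of ρ on (0,∞)
  have hρe : Antitone (fun s : ℝ => ρ (Real.exp s)) := by
    intro a b hab
    rcases eq_empty_or_nonempty (S (Real.exp b)) with he | hne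
    · have hz : ρ (Real.exp b) = 0 := by rw [hρdef]; simp only [he, Real.sSup_empty]
      show ρ (Real.exp b) ≤ ρ (Real.exp a)
      rw [hz]; exact hρ0 _
    · exact csSup_le_csSup (hSbdd _ (Real.exp_pos a)) hne
        (fun r hr => ⟨hr.1, lt_of_le_of_lt (Real.exp_le_exp.mpr hab) hr.2⟩)
  have hρm : Measurable fun s : ℝ => ρ (Real.exp (Real.log s)) :=
    hρe.measurable.comp Real.measurable_log
  have hρae : ∀ᵐ s ∂(volume.restrict (Set.Ioi (0:ℝ))),
      ρ (Real.exp (Real.log s)) = ρ s := by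
    rw [ae_restrict_iff' measurableSet_Ioi]
    exact ae_of_all _ fun s hs => by rw [Real.exp_log hs]
  -- integrable pieces of the dominating function
  have hterm : ∀ β : ℝ, 0 < β → IntegrableOn (fun r => q r * r ^ (β - 1)) (Set.Ioi 0) →
      ∀ D : ℝ, 0 ≤ D → Integrable (fun s => D * ρ s ^ β) (volume.restrict (Set.Ioi 0)) := by
    intro β hβ hqβ D hD
    have hmeas : AEMeasurable (fun s => D * ρ s ^ β) (volume.restrict (Set.Ioi (0:ℝ))) := by
      have h1 : Measurable fun s : ℝ => D * ρ (Real.exp (Real.log s)) ^ β :=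
        measurable_const.mul
          ((by fun_prop : Measurable fun x : ℝ => x ^ β).comp hρm)
      exact h1.aemeasurable.congr (hρae.mono fun s hs => by simp only [hs])
    refine ⟨hmeas.aestronglyMeasurable, ?_⟩
    have hnn : (0:ℝ → ℝ) ≤ᶠ[ae (volume.restrict (Set.Ioi (0:ℝ)))] fun s => D * ρ s ^ β :=
      ae_of_all _ fun s => mul_nonneg hD (Real.rpow_nonneg (hρ0 s) β)
    rw [hasFiniteIntegral_iff_ofReal hnn]
    calc ∫⁻ s in Set.Ioi (0:ℝ), ENNReal.ofReal (D * ρ s ^ β)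
        = ∫⁻ s in Set.Ioi (0:ℝ), ENNReal.ofReal D * ENNReal.ofReal (ρ s ^ β) := by
          simp_rw [ENNReal.ofReal_mul hD]
      _ = ENNReal.ofReal D * ∫⁻ s in Set.Ioi (0:ℝ), ENNReal.ofReal (ρ s ^ β) :=
          lintegral_const_mul' _ _ ENNReal.ofReal_ne_top
      _ = ENNReal.ofReal D * ENNReal.ofReal (β * ∫ r in Set.Ioi (0:ℝ), q r * r ^ (β - 1)) := by
          rw [keyE β hβ hqβ]
      _ < ⊤ := ENNReal.mul_lt_top ENNReal.ofReal_lt_top ENNReal.ofReal_lt_top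
  -- the dominating function
  set g : ℝ → ℝ := fun s => H * ρ s ^ α + C * ρ s ^ (α - ε') +
      (Set.Ioc 0 (q 0)).indicator (fun _ => H + C) s with hgdef
  have hgnn : ∀ s, 0 ≤ g s := by
    intro s
    have h1 : 0 ≤ H * ρ s ^ α := mul_nonneg hH (Real.rpow_nonneg (hρ0 s) _)
    have h2 : 0 ≤ C * ρ s ^ (α - ε') := mul_nonneg hC (Real.rpow_nonneg (hρ0 s) _)
    have h3 : (0:ℝ) ≤ (Set.Ioc 0 (q 0)).indicator (fun _ => H + C) s :=
      Set.indicator_nonneg (fun _ _ => by linarith) s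
    simp only [hgdef]
    linarith
  have hgint : Integrable g (volume.restrict (Set.Ioi 0)) := by
    have h1 := hterm α hα0 hint H hH
    have h2 := hterm (α - ε') (by linarith) lemH C hC
    have h3 : Integrable ((Set.Ioc (0:ℝ) (q 0)).indicator (fun _ => H + C))
        (volume.restrict (Set.Ioi 0)) := by
      rw [integrable_indicator_iff measurableSet_Ioc]
      refine (integrableOn_const_iff (by finiteness)).mpr (Or.inr ?_)
      exact lt_of_le_of_lt (Measure.restrict_apply_le _ _) measure_Ioc_lt_top
    exact ((h1.add h2).add h3 : _)
  -- domination
  have hdom : ∀ t : ℝ, 1 ≤ t → ∀ s : ℝ, 0 < s → t⁻¹ * (G t s).toReal ≤ g s := by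
    intro t ht s hs
    have ht0 : (0:ℝ) < t := by linarith
    have hterm1 : 0 ≤ H * ρ s ^ α := mul_nonneg hH (Real.rpow_nonneg (hρ0 s) _)
    have hterm2 : 0 ≤ C * ρ s ^ (α - ε') := mul_nonneg hC (Real.rpow_nonneg (hρ0 s) _)
    rcases eq_or_ne (G t s) 0 with h0 | hne
    · rw [h0]
      simpa using hgnn s
    · have hAne : {x : EuclideanSpace ℝ (Fin d) | s < Q (t ^ (-(1/α)) * ‖x‖)}.Nonempty := by
        rw [nonempty_iff_ne_empty]
        intro hemp
        apply hne
        show Λ _ = 0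
        rw [hemp]
        exact measure_empty
      obtain ⟨x₀, hx₀⟩ := hAne
      have hsq0 : s < q 0 := by
        have h1 : Q (t ^ (-(1/α)) * ‖x₀‖) ≤ Q 0 :=
          hQanti (mul_nonneg (hc t ht).le (norm_nonneg _))
        have h2 : s < Q 0 := lt_of_lt_of_le hx₀ h1
        rwa [hQq 0 le_rfl] at h2
      have hindval : (Set.Ioc 0 (q 0)).indicator (fun _ : ℝ => H + C) s = H + C :=
        Set.indicator_of_mem (Set.mem_Ioc.mpr ⟨hs, hsq0.le⟩) _
      have hGle : (G t s).toReal ≤ F (t ^ (1/α) * ρ s) := hGF t ht s hs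
      have htinv : (0:ℝ) ≤ t⁻¹ := inv_nonneg.mpr ht0.le
      rcases le_or_gt 1 (t ^ (1/α) * ρ s) with hu | hu
      · have hρpos : 0 < ρ s := by
          rcases eq_or_lt_of_le (hρ0 s) with h' | h'
          · rw [← h', mul_zero] at hu; linarith
          · exact h'
        have hB := lemB t ht (ρ s) hρpos hu
        have h4 : t⁻¹ * (G t s).toReal ≤ t⁻¹ * F (t ^ (1/α) * ρ s) :=
          mul_le_mul_of_nonneg_left hGle htinv
        simp only [hgdef]
        rw [hindval]
        linarith
      · have h2 : F (t ^ (1/α) * ρ s) ≤ F 1 := hFmono hu.le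
        have h3 : t⁻¹ ≤ 1 := by
          rw [inv_le_one_iff₀]
          right; exact ht
        have h4 : t⁻¹ * (G t s).toReal ≤ F 1 := by
          have h5 : t⁻¹ * (G t s).toReal ≤ 1 * F (t ^ (1/α) * ρ s) :=
            mul_le_mul h3 hGle ENNReal.toReal_nonneg zero_le_one
          rw [one_mul] at h5
          linarith
        simp only [hgdef]
        rw [hindval]
        linarith
  -- pointwise convergence
  have hlim : ∀ s : ℝ, 0 < s →
      Tendsto (fun t : ℝ => t⁻¹ * (G t s).toReal) atTop (nhds (H * ρ s ^ α)) := by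
    intro s hs
    rcases eq_or_lt_of_le (hρ0 s) with hρz | hρpos
    · have hH0 : H * ρ s ^ α = 0 := by
        rw [← hρz, Real.zero_rpow hα0.ne', mul_zero]
      rw [hH0]
      refine squeeze_zero_norm' (a := fun t : ℝ => t⁻¹ * F 0) ?_ ?_
      · filter_upwards [eventually_ge_atTop (1:ℝ)] with t ht
        have ht0 : (0:ℝ) < t := by linarith
        have h1 : (G t s).toReal ≤ F (t ^ (1/α) * ρ s) := hGF t ht s hs
        rw [← hρz, mul_zero] at h1
        rw [Real.norm_eq_abs, abs_of_nonneg
          (mul_nonneg (inv_nonneg.mpr ht0.le) ENNReal.toReal_nonneg)]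
        exact mul_le_mul_of_nonneg_left h1 (inv_nonneg.mpr ht0.le)
      · simpa using tendsto_inv_atTop_zero.mul_const (F 0)
    · rw [Metric.tendsto_atTop]
      intro δ hδ
      have hcont : ContinuousAt (fun R : ℝ => H * R ^ α) (ρ s) :=
        continuousAt_const.mul (Real.continuousAt_rpow_const _ _ (Or.inl hρpos.ne'))
      obtain ⟨δ', hδ'0, hδ'⟩ := Metric.continuousAt_iff.mp hcont (δ/2) (by linarith)
      set R : ℝ := max (ρ s / 2) (ρ s - δ'/2) with hRdef
      have hR0 : 0 < R := lt_of_lt_of_le (by linarith) (le_max_left _ _)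
      have hRρ : R < ρ s := max_lt (by linarith) (by linarith)
      have hRd : dist R (ρ s) < δ' := by
        rw [Real.dist_eq, abs_of_nonpos (by linarith)]
        have h6 := le_max_right (ρ s / 2) (ρ s - δ'/2)
        simp only [neg_sub]
        linarith
      have hclose := hδ' hRd
      rw [Real.dist_eq] at hclose
      have e2 := lemA (ρ s) hρpos
      have e3 := lemA R hR0
      rw [Metric.tendsto_atTop] at e2 e3
      obtain ⟨N2, hN2⟩ := e2 (δ/2) (by linarith)
      obtain ⟨N3, hN3⟩ := e3 (δ/2) (by linarith)
      refine ⟨max 1 (max N2 N3), fun t ht => ?_⟩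
      have ht1 : (1:ℝ) ≤ t := le_trans (le_max_left _ _) ht
      have ht0 : (0:ℝ) < t := by linarith
      have h2 := hN2 t (le_trans (le_trans (le_max_left N2 N3) (le_max_right 1 _)) ht)
      have h3 := hN3 t (le_trans (le_trans (le_max_right N2 N3) (le_max_right 1 _)) ht)
      rw [Real.dist_eq] at h2 h3
      have hup : t⁻¹ * (G t s).toReal ≤ t⁻¹ * F (t ^ (1/α) * ρ s) :=
        mul_le_mul_of_nonneg_left (hGF t ht1 s hs) (inv_nonneg.mpr ht0.le)
      have hlow : t⁻¹ * F (t ^ (1/α) * R) ≤ t⁻¹ * (G t s).toReal := by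
        have hsub := hGlow t ht1 s R hR0 hRρ
        have h7 : F (t ^ (1/α) * R) ≤ (G t s).toReal :=
          ENNReal.toReal_mono (hGfin t ht1 s hs) (measure_mono hsub)
        exact mul_le_mul_of_nonneg_left h7 (inv_nonneg.mpr ht0.le)
      rw [Real.dist_eq]
      rw [abs_lt] at h2 h3 hclose ⊢
      constructor
      · linarith
      · linarith
  -- sigma-finiteness of Λ
  haveI hSF : SigmaFinite Λ :=
    ⟨⟨⟨fun n => Metric.closedBall 0 n, fun _ => mem_univ _,
      fun n => hΛ _ isBounded_closedBall, iUnion_closedBall_nat 0⟩⟩⟩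
  -- the identity for t ≥ 1
  have hmain : ∀ t : ℝ, 1 ≤ t →
      t⁻¹ * ∫ x, q (t ^ (-(1/α)) * ‖x‖) ∂Λ
        = ∫ s in Set.Ioi (0:ℝ), t⁻¹ * (G t s).toReal := by
    intro t ht
    have hc0 := hc t ht
    have hmeasx : Measurable fun x : EuclideanSpace ℝ (Fin d) => Q (t ^ (-(1/α)) * ‖x‖) :=
      hQmeas.comp (measurable_const.mul measurable_norm)
    have h1 : ∫ x, q (t ^ (-(1/α)) * ‖x‖) ∂Λ = ∫ x, Q (t ^ (-(1/α)) * ‖x‖) ∂Λ :=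
      integral_congr_ae (ae_of_all _ fun x =>
        (hQq _ (mul_nonneg hc0.le (norm_nonneg x))).symm)
    rw [h1, integral_eq_lintegral_of_nonneg_ae (ae_of_all _ fun x => hQ0 _)
      hmeasx.aestronglyMeasurable,
      lintegral_eq_lintegral_meas_lt Λ (ae_of_all _ fun x => hQ0 _) hmeasx.aemeasurable]
    have h2 : ∫ s in Set.Ioi (0:ℝ), (G t s).toReal
        = (∫⁻ s in Set.Ioi (0:ℝ), G t s).toReal := by
      refine integral_toReal (hGmeas t).aemeasurable ?_
      rw [ae_restrict_iff' measurableSet_Ioi]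
      exact ae_of_all _ fun s hs => lt_top_iff_ne_top.mpr (hGfin t ht s hs)
    show t⁻¹ * (∫⁻ s in Set.Ioi (0:ℝ), G t s).toReal = _
    rw [← h2, ← integral_const_mul]
  -- the dominated convergence
  have hfinal : Tendsto (fun t : ℝ => ∫ s in Set.Ioi (0:ℝ), t⁻¹ * (G t s).toReal) atTop
      (nhds (∫ s in Set.Ioi (0:ℝ), H * ρ s ^ α)) := by
    refine tendsto_integral_filter_of_dominated_convergence g ?_ ?_ hgint ?_
    · refine Eventually.of_forall fun t => ?_
      exact ((ENNReal.measurable_toReal.comp (hGmeas t)).const_mul t⁻¹).aestronglyMeasurable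
    · filter_upwards [eventually_ge_atTop (1:ℝ)] with t ht
      rw [ae_restrict_iff' measurableSet_Ioi]
      refine ae_of_all _ fun s hs => ?_
      rw [Real.norm_eq_abs, abs_of_nonneg
        (mul_nonneg (inv_nonneg.mpr (by linarith : (0:ℝ) ≤ t)) ENNReal.toReal_nonneg)]
      exact hdom t ht s hs
    · rw [ae_restrict_iff' measurableSet_Ioi]
      exact ae_of_all _ fun s hs => hlim s hs
  -- identification of the limit value
  have hval : ∫ s in Set.Ioi (0:ℝ), H * ρ s ^ α
      = H * (α * ∫ r in Set.Ioi (0:ℝ), q r * r ^ (α - 1)) := by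
    rw [integral_const_mul]
    congr 1
    have hnn : (0:ℝ → ℝ) ≤ᶠ[ae (volume.restrict (Set.Ioi (0:ℝ)))] fun s => ρ s ^ α :=
      ae_of_all _ fun s => Real.rpow_nonneg (hρ0 s) _
    have hsm : AEStronglyMeasurable (fun s => ρ s ^ α) (volume.restrict (Set.Ioi (0:ℝ))) := by
      have h1 : Measurable fun s : ℝ => ρ (Real.exp (Real.log s)) ^ α :=
        (by fun_prop : Measurable fun x : ℝ => x ^ α).comp hρm
      exact (h1.aemeasurable.congr (hρae.mono fun s hs => by simp only [hs])).aestronglyMeasurable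
    rw [integral_eq_lintegral_of_nonneg_ae hnn hsm, keyE α hα0 hint, ENNReal.toReal_ofReal ?_]
    exact mul_nonneg hα0.le (setIntegral_nonneg measurableSet_Ioi fun r hr =>
      mul_nonneg (hq0 r) (Real.rpow_nonneg (le_of_lt hr) _))
  rw [← hval]
  refine Tendsto.congr' ?_ hfinal
  filter_upwards [eventually_ge_atTop (1:ℝ)] with t ht
  exact (hmain t ht).symm
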